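/- arXiv:1110.6247 — 3 statements merged into one kernel-verified Lean document; each statement's English description precedes it below -/
import Mathlib

section
/- Let T > 0, α > 0, and let u, v : [0,1] × [0,T] → ℝ be C² functions solving v_t − (u v)_x = v_xx on (0,1) × (0,T] with Neumann boundary conditions v_x(0,t) = v_x(1,t) = 0 and initial data v(x,0) ≥ α. Let M = sup_{[0,1]×[0,T]} |u_x(x,t)| and assume M < ∞. Then for all (x,t) ∈ [0,1] × [0,T]: v(x,t) ≥ α e^{−M t} ≥ α e^{−M T}. -/
open MeasureTheory

/-- Partial derivative in the spatial variable `x` (first argument). -/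
noncomputable def pdx (f : ℝ → ℝ → ℝ) : ℝ → ℝ → ℝ := fun x t => deriv (fun y => f y t) x

/-- Partial derivative in the time variable `t` (second argument). -/
noncomputable def pdt (f : ℝ → ℝ → ℝ) : ℝ → ℝ → ℝ := fun x t => deriv (fun s => f x s) t

open Set Function Filter

section
variable {f : ℝ → ℝ → ℝ}
lemma diffAt_slice_x (hf : ContDiff ℝ 1 (uncurry f)) (x t : ℝ) :
    DifferentiableAt ℝ (fun y => f y t) x :=
  (((hf.differentiable one_ne_zero) (x, t)).comp x ((differentiableAt_id (𝕜 := ℝ) (x := x)).prodMk (differentiableAt_const t)) :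
    DifferentiableAt ℝ (uncurry f ∘ fun y => (id y, t)) x)
lemma hasDerivAt_pdx (hf : ContDiff ℝ 1 (uncurry f)) (x t : ℝ) :
    HasDerivAt (fun y => f y t) (pdx f x t) x :=
  (diffAt_slice_x hf x t).hasDerivAt
lemma diffAt_slice_t (hf : ContDiff ℝ 1 (uncurry f)) (x t : ℝ) :
    DifferentiableAt ℝ (fun s => f x s) t :=
  ((hf.differentiable one_ne_zero) (x, t)).comp t ((differentiableAt_const x).prodMk differentiableAt_id)
lemma hasDerivAt_pdt (hf : ContDiff ℝ 1 (uncurry f)) (x t : ℝ) :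
    HasDerivAt (fun s => f x s) (pdt f x t) t :=
  (diffAt_slice_t hf x t).hasDerivAt
lemma pdx_eq_fderiv (hf : ContDiff ℝ 1 (uncurry f)) (x t : ℝ) :
    pdx f x t = fderiv ℝ (uncurry f) (x, t) (1, 0) := by
  have h1 : HasFDerivAt (uncurry f) (fderiv ℝ (uncurry f) (x, t)) (x, t) :=
    ((hf.differentiable one_ne_zero) (x, t)).hasFDerivAt
  have h2 : HasDerivAt (fun y => ((y, t) : ℝ × ℝ)) (1, 0) x :=
    (hasDerivAt_id x).prodMk (hasDerivAt_const x t)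
  exact (h1.comp_hasDerivAt x h2).deriv
lemma contDiff_uncurry_pdx {n : ℕ} (hf : ContDiff ℝ (n + 1) (uncurry f)) :
    ContDiff ℝ n (uncurry (pdx f)) := by
  have h1 : ContDiff ℝ n (fderiv ℝ (uncurry f)) := by
    apply hf.fderiv_right
    exact_mod_cast le_refl ((n : WithTop ℕ∞) + 1)
  have h2 : ContDiff ℝ n (fun p : ℝ × ℝ => fderiv ℝ (uncurry f) p (1, 0)) :=
    h1.clm_apply contDiff_const
  have heq : uncurry (pdx f) = fun p : ℝ × ℝ => fderiv ℝ (uncurry f) p (1, 0) := by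
    funext p
    exact pdx_eq_fderiv (hf.of_le (by exact_mod_cast Nat.one_le_iff_ne_zero.mpr (Nat.succ_ne_zero n))) p.1 p.2
  rw [heq]; exact h2
lemma continuous_uncurry_pdx (hf : ContDiff ℝ 1 (uncurry f)) :
    Continuous (uncurry (pdx f)) :=
  (contDiff_uncurry_pdx (n := 0) (by exact_mod_cast hf)).continuous
lemma continuous_uncurry_pdt (hf : ContDiff ℝ 1 (uncurry f)) :
    Continuous (uncurry (pdt f)) := by
  have h1 : ContDiff ℝ 0 (fderiv ℝ (uncurry f)) := hf.fderiv_right (by norm_num)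
  have h2 : Continuous (fun p : ℝ × ℝ => fderiv ℝ (uncurry f) p (0, 1)) :=
    (h1.clm_apply contDiff_const).continuous
  have heq : uncurry (pdt f) = fun p : ℝ × ℝ => fderiv ℝ (uncurry f) p (0, 1) := by
    funext p
    have h1' : HasFDerivAt (uncurry f) (fderiv ℝ (uncurry f) (p.1, p.2)) (p.1, p.2) :=
      ((hf.differentiable one_ne_zero) (p.1, p.2)).hasFDerivAt
    have h2' : HasDerivAt (fun s => ((p.1, s) : ℝ × ℝ)) (0, 1) p.2 :=
      (hasDerivAt_const p.2 p.1).prodMk (hasDerivAt_id p.2)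
    exact (h1'.comp_hasDerivAt p.2 h2').deriv
  rw [heq]; exact h2
end


/-- At a minimum over `[0,T]` attained at `t0 > 0`, the derivative is `≤ 0`. -/
lemma deriv_nonpos_of_min (g : ℝ → ℝ) (T t0 d : ℝ) (ht0 : t0 ∈ Icc 0 T) (h0 : 0 < t0)
    (hmin : ∀ t ∈ Icc 0 T, g t0 ≤ g t) (hd : HasDerivAt g d t0) : d ≤ 0 := by
  have hs : Tendsto (slope g t0) (nhdsWithin t0 {t0}ᶜ) (nhds d) :=
    hasDerivAt_iff_tendsto_slope.mp hd
  have hsub : nhdsWithin t0 (Iio t0) ≤ nhdsWithin t0 {t0}ᶜ :=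
    nhdsWithin_mono t0 (fun x hx => ne_of_lt hx)
  have hs2 : Tendsto (slope g t0) (nhdsWithin t0 (Iio t0)) (nhds d) := hs.mono_left hsub
  have hev : ∀ᶠ t in nhdsWithin t0 (Iio t0), slope g t0 t ≤ 0 := by
    have hIoo : Ioo 0 t0 ∈ nhdsWithin t0 (Iio t0) :=
      Ioo_mem_nhdsLT_of_mem ⟨h0, le_refl t0⟩
    filter_upwards [hIoo] with t ht
    have htI : t ∈ Icc 0 T := ⟨le_of_lt ht.1, le_trans (le_of_lt ht.2) ht0.2⟩
    have h1 : g t0 ≤ g t := hmin t htI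
    rw [slope_def_field]
    apply div_nonpos_of_nonneg_of_nonpos
    · linarith
    · linarith [ht.2]
  exact le_of_tendsto hs2 hev

/-- Second-derivative test at a (possibly boundary) minimum on `[0,1]`. -/
lemma second_deriv_nonneg (f f' : ℝ → ℝ) (x0 d2 : ℝ) (hx0 : x0 ∈ Icc (0:ℝ) 1)
    (hf' : ∀ x, HasDerivAt f (f' x) x)
    (hmin : ∀ x ∈ Icc (0:ℝ) 1, f x0 ≤ f x)
    (h0 : f' x0 = 0) (hd2 : HasDerivAt f' d2 x0) : 0 ≤ d2 := by
  by_contra hneg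
  push_neg at hneg
  have hderiv : deriv f = f' := funext fun x => (hf' x).deriv
  have hslope : Tendsto (slope f' x0) (nhdsWithin x0 {x0}ᶜ) (nhds d2) :=
    hasDerivAt_iff_tendsto_slope.mp hd2
  rcases lt_or_eq_of_le hx0.2 with hx1 | hx1
  · -- x0 < 1 : go right
    have hs2 : Tendsto (slope f' x0) (nhdsWithin x0 (Ioi x0)) (nhds d2) :=
      hslope.mono_left (nhdsWithin_mono x0 (fun x hx => ne_of_gt hx))
    have hev : ∀ᶠ x in nhdsWithin x0 (Ioi x0), slope f' x0 x < 0 :=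
      hs2.eventually (Filter.Tendsto.eventually_lt_const hneg tendsto_id) |>.mono (fun x hx => hx)
    rw [eventually_iff, mem_nhdsGT_iff_exists_Ioo_subset] at hev
    obtain ⟨b, hb, hsub⟩ := hev
    set c := min b 1 with hc
    have hx0c : x0 < c := lt_min hb hx1
    have hanti : StrictAntiOn f (Icc x0 c) := by
      apply strictAntiOn_of_deriv_neg (convex_Icc x0 c)
        (Continuous.continuousOn (Differentiable.continuous (fun x => (hf' x).differentiableAt)))
      intro x hx
      rw [interior_Icc] at hx
      have hxmem : x ∈ Ioo x0 b := ⟨hx.1, lt_of_lt_of_le hx.2 (min_le_left b 1)⟩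
      have := hsub hxmem
      simp only [mem_setOf_eq, slope_def_field, h0, sub_zero] at this
      rw [hderiv]
      have hxpos : 0 < x - x0 := by linarith [hx.1]
      rw [div_neg_iff] at this
      rcases this with ⟨_, h⟩ | ⟨h, _⟩
      · linarith
      · exact h
    have hcI : c ∈ Icc (0:ℝ) 1 := ⟨le_trans hx0.1 (le_of_lt hx0c), min_le_right b 1⟩
    have := hanti (left_mem_Icc.mpr (le_of_lt hx0c)) (right_mem_Icc.mpr (le_of_lt hx0c)) hx0c
    linarith [hmin c hcI]
  · -- x0 = 1 : go left
    have h0x : (0:ℝ) < x0 := by rw [hx1]; norm_num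
    have hs2 : Tendsto (slope f' x0) (nhdsWithin x0 (Iio x0)) (nhds d2) :=
      hslope.mono_left (nhdsWithin_mono x0 (fun x hx => ne_of_lt hx))
    have hev : ∀ᶠ x in nhdsWithin x0 (Iio x0), slope f' x0 x < 0 :=
      hs2.eventually (Filter.Tendsto.eventually_lt_const hneg tendsto_id) |>.mono (fun x hx => hx)
    rw [eventually_iff, mem_nhdsLT_iff_exists_Ioo_subset] at hev
    obtain ⟨a, ha, hsub⟩ := hev
    set c := max a 0 with hc
    have hcx0 : c < x0 := max_lt ha h0x
    have hmono : StrictMonoOn f (Icc c x0) := by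
      apply strictMonoOn_of_deriv_pos (convex_Icc c x0)
        (Continuous.continuousOn (Differentiable.continuous (fun x => (hf' x).differentiableAt)))
      intro x hx
      rw [interior_Icc] at hx
      have hxmem : x ∈ Ioo a x0 := ⟨lt_of_le_of_lt (le_max_left a 0) hx.1, hx.2⟩
      have := hsub hxmem
      simp only [mem_setOf_eq, slope_def_field, h0, sub_zero] at this
      rw [hderiv]
      have hxneg : x - x0 < 0 := by linarith [hx.2]
      rw [div_neg_iff] at this
      rcases this with ⟨h, _⟩ | ⟨_, h⟩
      · exact h
      · linarith
    have hcI : c ∈ Icc (0:ℝ) 1 := ⟨le_max_right a 0, le_trans (le_of_lt hcx0) hx0.2⟩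
    have := hmono (left_mem_Icc.mpr (le_of_lt hcx0)) (right_mem_Icc.mpr (le_of_lt hcx0)) hcx0
    linarith [hmin c hcI]

lemma min_principle (T β : ℝ) (hT : 0 < T) (w u c : ℝ → ℝ → ℝ)
    (hw : ContDiff ℝ 2 (uncurry w))
    (hpde : ∀ x ∈ Icc (0:ℝ) 1, ∀ t ∈ Ioc (0:ℝ) T,
      pdt w x t = pdx (pdx w) x t + u x t * pdx w x t + c x t * w x t)
    (hbc : ∀ t ∈ Icc (0:ℝ) T, pdx w 0 t = 0 ∧ pdx w 1 t = 0)
    (hinit : ∀ x ∈ Icc (0:ℝ) 1, β ≤ w x 0)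
    (hsign : ∀ x ∈ Icc (0:ℝ) 1, ∀ t ∈ Icc (0:ℝ) T, w x t < β → 0 ≤ c x t * w x t) :
    ∀ x ∈ Icc (0:ℝ) 1, ∀ t ∈ Icc (0:ℝ) T, β ≤ w x t := by
  have hw1 : ContDiff ℝ 1 (uncurry w) := hw.of_le one_le_two
  have hwpd1 : ContDiff ℝ 1 (uncurry (pdx w)) :=
    contDiff_uncurry_pdx (n := 1) (by exact_mod_cast hw)
  by_contra hcon
  push_neg at hcon
  obtain ⟨x1, hx1, t1, ht1, hlt⟩ := hcon
  set ε : ℝ := (β - w x1 t1) / (2 * T) with hε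
  have hεpos : 0 < ε := by
    apply div_pos (by linarith) (by linarith)
  set φ : ℝ × ℝ → ℝ := fun p => w p.1 p.2 + ε * p.2 with hφ
  have hφcont : Continuous φ := by
    have : Continuous (uncurry w) := hw.continuous
    exact (this.comp continuous_id).add (continuous_const.mul continuous_snd)
  set K : Set (ℝ × ℝ) := Icc (0:ℝ) 1 ×ˢ Icc (0:ℝ) T with hK
  have hKcomp : IsCompact K := isCompact_Icc.prod isCompact_Icc
  have hKne : K.Nonempty := ⟨(x1, t1), ⟨hx1, ht1⟩⟩
  obtain ⟨p0, hp0K, hmin⟩ := hKcomp.exists_isMinOn hKne hφcont.continuousOn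
  obtain ⟨x0, t0⟩ := p0
  have hminle : ∀ q ∈ K, φ (x0, t0) ≤ φ q := fun q hq => hmin hq
  obtain ⟨hx0, ht0⟩ := hp0K
  simp only [] at hx0 ht0
  -- the min value is < β
  have hφβ : φ (x0, t0) < β := by
    have h1 : φ (x0, t0) ≤ φ (x1, t1) := hminle _ ⟨hx1, ht1⟩
    have h2 : ε * t1 ≤ ε * T := by
      apply mul_le_mul_of_nonneg_left ht1.2 (le_of_lt hεpos)
    have h3 : ε * T = (β - w x1 t1) / 2 := by
      rw [hε]
      field_simp
    simp only [hφ] at h1 ⊢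
    calc w x0 t0 + ε * t0 ≤ w x1 t1 + ε * t1 := h1
    _ ≤ w x1 t1 + (β - w x1 t1) / 2 := by rw [← h3] at *; linarith
    _ < β := by linarith
  -- t0 > 0
  have ht0pos : 0 < t0 := by
    rcases lt_or_eq_of_le ht0.1 with h | h
    · exact h
    · exfalso
      have hi := hinit x0 hx0
      have heq : φ (x0, t0) = w x0 0 := by
        show w x0 t0 + ε * t0 = w x0 0
        rw [← h]; ring
      linarith [heq ▸ hφβ]
  -- w value at min is < β
  have hwβ : w x0 t0 < β := by
    have heq : φ (x0, t0) = w x0 t0 + ε * t0 := rfl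
    nlinarith [mul_nonneg (le_of_lt hεpos) ht0.1, heq ▸ hφβ]
  -- spatial min: for all x ∈ Icc 0 1, w x0 t0 ≤ w x t0
  have hxmin : ∀ x ∈ Icc (0:ℝ) 1, w x0 t0 ≤ w x t0 := by
    intro x hx
    have := hminle (x, t0) ⟨hx, ht0⟩
    simp only [hφ] at this
    linarith
  -- Step A: pdx w x0 t0 = 0
  have hA : pdx w x0 t0 = 0 := by
    rcases eq_or_lt_of_le hx0.1 with h0 | h0
    · subst h0
      exact (hbc t0 ht0).1
    rcases eq_or_lt_of_le hx0.2 with h1 | h1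
    · rw [h1]
      exact (hbc t0 ht0).2
    · -- interior min
      have hloc : IsLocalMin (fun y => w y t0) x0 := by
        have hmem : Icc (0:ℝ) 1 ∈ nhds x0 := Icc_mem_nhds h0 h1
        filter_upwards [hmem] with y hy
        exact hxmin y hy
      exact hloc.deriv_eq_zero
  -- Step B: 0 ≤ pdx (pdx w) x0 t0
  have hB : 0 ≤ pdx (pdx w) x0 t0 := by
    apply second_deriv_nonneg (fun y => w y t0) (fun y => pdx w y t0) x0 _ hx0
    · intro x
      exact hasDerivAt_pdx hw1 x t0
    · exact hxmin
    · exact hA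
    · exact hasDerivAt_pdx hwpd1 x0 t0
  -- Step C: pdt w x0 t0 ≤ -ε
  have hC : pdt w x0 t0 ≤ -ε := by
    have hg : HasDerivAt (fun s => w x0 s + ε * s) (pdt w x0 t0 + ε) t0 := by
      have h1 := hasDerivAt_pdt hw1 x0 t0
      have h2 : HasDerivAt (fun s => ε * s) ε t0 := by
        simpa using (hasDerivAt_id t0).const_mul ε
      exact h1.add h2
    have hgmin : ∀ t ∈ Icc 0 T, w x0 t0 + ε * t0 ≤ w x0 t + ε * t := by
      intro t ht
      have := hminle (x0, t) ⟨hx0, ht⟩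
      simpa [hφ] using this
    have := deriv_nonpos_of_min (fun s => w x0 s + ε * s) T t0 (pdt w x0 t0 + ε)
      ht0 ht0pos hgmin hg
    linarith
  -- contradiction via PDE
  have hpde0 := hpde x0 hx0 t0 ⟨ht0pos, ht0.2⟩
  have hsign0 := hsign x0 hx0 t0 ht0 hwβ
  rw [hA] at hpde0
  simp at hpde0
  nlinarith


/-- Extend the PDE from the open spatial interval to the closed one, by continuity. -/
lemma pde_extend (T : ℝ) (w u c : ℝ → ℝ → ℝ)
    (hw : ContDiff ℝ 2 (uncurry w))
    (hu : Continuous (uncurry u)) (hc : Continuous (uncurry c))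
    (h : ∀ x ∈ Ioo (0:ℝ) 1, ∀ t ∈ Ioc (0:ℝ) T,
      pdt w x t = pdx (pdx w) x t + u x t * pdx w x t + c x t * w x t) :
    ∀ x ∈ Icc (0:ℝ) 1, ∀ t ∈ Ioc (0:ℝ) T,
      pdt w x t = pdx (pdx w) x t + u x t * pdx w x t + c x t * w x t := by
  intro x hx t ht
  have hw1 : ContDiff ℝ 1 (uncurry w) := hw.of_le one_le_two
  have hwpd1 : ContDiff ℝ 1 (uncurry (pdx w)) :=
    contDiff_uncurry_pdx (n := 1) (by exact_mod_cast hw)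
  have hslice : Continuous (fun y : ℝ => ((y, t) : ℝ × ℝ)) :=
    continuous_id.prodMk continuous_const
  set F : ℝ → ℝ := fun y => pdt w y t with hF
  set G : ℝ → ℝ := fun y => pdx (pdx w) y t + u y t * pdx w y t + c y t * w y t with hG
  have hFc : Continuous F := (continuous_uncurry_pdt hw1).comp hslice
  have hGc : Continuous G := by
    apply Continuous.add
    apply Continuous.add
    · exact (continuous_uncurry_pdx hwpd1).comp hslice
    · exact ((hu.comp hslice).mul ((continuous_uncurry_pdx hw1).comp hslice))
    · exact ((hc.comp hslice).mul (hw.continuous.comp hslice))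
  have hEq : EqOn F G (Ioo (0:ℝ) 1) := fun y hy => h y hy t ht
  have hEq2 : EqOn F G (Icc (0:ℝ) 1) := by
    have := hEq.closure hFc hGc
    rwa [closure_Ioo (by norm_num : (0:ℝ) ≠ 1)] at this
  exact hEq2 hx

section transform
variable (lam : ℝ) (v : ℝ → ℝ → ℝ)

lemma transform_contDiff (hv : ContDiff ℝ 2 (uncurry v)) :
    ContDiff ℝ 2 (uncurry (fun x t => Real.exp (lam * t) * v x t)) := by
  have h1 : ContDiff ℝ 2 (fun p : ℝ × ℝ => Real.exp (lam * p.2)) :=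
    (Real.contDiff_exp.of_le le_top).comp (contDiff_const.mul contDiff_snd)
  exact h1.mul hv

lemma transform_pdx (hv : ContDiff ℝ 2 (uncurry v)) (x t : ℝ) :
    pdx (fun x t => Real.exp (lam * t) * v x t) x t = Real.exp (lam * t) * pdx v x t := by
  have hv1 : ContDiff ℝ 1 (uncurry v) := hv.of_le one_le_two
  exact ((hasDerivAt_pdx hv1 x t).const_mul (Real.exp (lam * t))).deriv

lemma transform_pdxx (hv : ContDiff ℝ 2 (uncurry v)) (x t : ℝ) :
    pdx (pdx (fun x t => Real.exp (lam * t) * v x t)) x t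
      = Real.exp (lam * t) * pdx (pdx v) x t := by
  have hv1 : ContDiff ℝ 1 (uncurry v) := hv.of_le one_le_two
  have hvpd1 : ContDiff ℝ 1 (uncurry (pdx v)) :=
    contDiff_uncurry_pdx (n := 1) (by exact_mod_cast hv)
  have hfun : (fun y => pdx (fun x t => Real.exp (lam * t) * v x t) y t)
      = fun y => Real.exp (lam * t) * pdx v y t :=
    funext fun y => transform_pdx lam v hv y t
  show deriv (fun y => pdx (fun x t => Real.exp (lam * t) * v x t) y t) x = _
  rw [hfun]
  exact ((hasDerivAt_pdx hvpd1 x t).const_mul (Real.exp (lam * t))).deriv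

lemma transform_pdt (hv : ContDiff ℝ 2 (uncurry v)) (x t : ℝ) :
    pdt (fun x t => Real.exp (lam * t) * v x t) x t
      = Real.exp (lam * t) * pdt v x t + lam * Real.exp (lam * t) * v x t := by
  have hv1 : ContDiff ℝ 1 (uncurry v) := hv.of_le one_le_two
  have hE : HasDerivAt (fun s => Real.exp (lam * s)) (lam * Real.exp (lam * t)) t := by
    have h1 : HasDerivAt (fun s : ℝ => lam * s) lam t := by
      simpa using (hasDerivAt_id t).const_mul lam
    simpa [mul_comm] using h1.exp
  have := (hE.mul (hasDerivAt_pdt hv1 x t)).deriv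
  show deriv (fun s => Real.exp (lam * s) * v x s) t = _
  exact this.trans (by ring)

end transform

/-- lower bound (3.4): if `v` is a `C²` solution of
`v_t − (u v)_x = v_xx` on `(0,1) × (0,T]` with Neumann boundary conditions,
`v(·,0) ≥ α`, and `M` bounds `sup |u_x|` on `[0,1] × [0,T]`, then
`v(x,t) ≥ α e^{−M t} ≥ α e^{−M T}` on `[0,1] × [0,T]`. -/
theorem statement14 (T α M : ℝ) (hT : 0 < T) (hα : 0 < α)
    (u v : ℝ → ℝ → ℝ)
    (hu : ContDiff ℝ 2 (Function.uncurry u))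
    (hv : ContDiff ℝ 2 (Function.uncurry v))
    (hpde : ∀ x ∈ Set.Ioo (0:ℝ) 1, ∀ t ∈ Set.Ioc (0:ℝ) T,
      pdt v x t - pdx (fun y s => u y s * v y s) x t = pdx (pdx v) x t)
    (hbc : ∀ t ∈ Set.Icc (0:ℝ) T, pdx v 0 t = 0 ∧ pdx v 1 t = 0)
    (hinit : ∀ x ∈ Set.Icc (0:ℝ) 1, α ≤ v x 0)
    (hM : ∀ x ∈ Set.Icc (0:ℝ) 1, ∀ t ∈ Set.Icc (0:ℝ) T, |pdx u x t| ≤ M) :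
    ∀ x ∈ Set.Icc (0:ℝ) 1, ∀ t ∈ Set.Icc (0:ℝ) T,
      α * Real.exp (-M * t) ≤ v x t ∧
      α * Real.exp (-M * T) ≤ α * Real.exp (-M * t) := by
  have hu1 : ContDiff ℝ 1 (uncurry u) := hu.of_le one_le_two
  have hv1 : ContDiff ℝ 1 (uncurry v) := hv.of_le one_le_two
  have hM0 : 0 ≤ M :=
    le_trans (abs_nonneg _) (hM 0 ⟨le_refl 0, zero_le_one⟩ 0 ⟨le_refl 0, hT.le⟩)
  -- expanded PDE for v
  have hpde' : ∀ x ∈ Ioo (0:ℝ) 1, ∀ t ∈ Ioc (0:ℝ) T,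
      pdt v x t = pdx (pdx v) x t + u x t * pdx v x t + pdx u x t * v x t := by
    intro x hx t ht
    have h0 := hpde x hx t ht
    have hprod : pdx (fun y s => u y s * v y s) x t
        = pdx u x t * v x t + u x t * pdx v x t :=
      ((hasDerivAt_pdx hu1 x t).mul (hasDerivAt_pdx hv1 x t)).deriv
    rw [hprod] at h0
    linarith
  ---- Stage 1 : v ≥ 0 on K
  set w1 : ℝ → ℝ → ℝ := fun x t => Real.exp (-M * t) * v x t with hw1def
  have hw1C : ContDiff ℝ 2 (uncurry w1) := transform_contDiff (-M) v hv
  set c1 : ℝ → ℝ → ℝ := fun x t => pdx u x t + (-M) with hc1def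
  have hc1cont : Continuous (uncurry c1) :=
    (continuous_uncurry_pdx hu1).add continuous_const
  have hpde1 : ∀ x ∈ Ioo (0:ℝ) 1, ∀ t ∈ Ioc (0:ℝ) T,
      pdt w1 x t = pdx (pdx w1) x t + u x t * pdx w1 x t + c1 x t * w1 x t := by
    intro x hx t ht
    have hE := hpde' x hx t ht
    simp only [hw1def, hc1def]
    rw [transform_pdt (-M) v hv, transform_pdxx (-M) v hv, transform_pdx (-M) v hv, hE]
    ring
  have hpde1' := pde_extend T w1 u c1 hw1C hu.continuous hc1cont hpde1
  have hbc1 : ∀ t ∈ Icc (0:ℝ) T, pdx w1 0 t = 0 ∧ pdx w1 1 t = 0 := by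
    intro t ht
    constructor
    · rw [hw1def, transform_pdx (-M) v hv, (hbc t ht).1, mul_zero]
    · rw [hw1def, transform_pdx (-M) v hv, (hbc t ht).2, mul_zero]
  have hinit1 : ∀ x ∈ Icc (0:ℝ) 1, (0:ℝ) ≤ w1 x 0 := by
    intro x hx
    have h1 : 0 ≤ v x 0 := le_trans hα.le (hinit x hx)
    exact mul_nonneg (Real.exp_pos _).le h1
  have hsign1 : ∀ x ∈ Icc (0:ℝ) 1, ∀ t ∈ Icc (0:ℝ) T,
      w1 x t < 0 → 0 ≤ c1 x t * w1 x t := by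
    intro x hx t ht hneg
    have h1 : c1 x t ≤ 0 := by
      have h2 := hM x hx t ht
      have h3 := le_abs_self (pdx u x t)
      simp only [hc1def]
      linarith
    nlinarith [mul_nonneg (neg_nonneg.mpr h1) (neg_nonneg.mpr hneg.le)]
  have hvpos : ∀ x ∈ Icc (0:ℝ) 1, ∀ t ∈ Icc (0:ℝ) T, 0 ≤ v x t := by
    intro x hx t ht
    have h1 := min_principle T 0 hT w1 u c1 hw1C hpde1' hbc1 hinit1 hsign1 x hx t ht
    have h2 : Real.exp (-M * t) * 0 ≤ Real.exp (-M * t) * v x t := by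
      simpa [hw1def] using h1
    exact le_of_mul_le_mul_left h2 (Real.exp_pos _)
  ---- Stage 2 : e^{Mt} v ≥ α on K
  set w2 : ℝ → ℝ → ℝ := fun x t => Real.exp (M * t) * v x t with hw2def
  have hw2C : ContDiff ℝ 2 (uncurry w2) := transform_contDiff M v hv
  set c2 : ℝ → ℝ → ℝ := fun x t => pdx u x t + M with hc2def
  have hc2cont : Continuous (uncurry c2) :=
    (continuous_uncurry_pdx hu1).add continuous_const
  have hpde2 : ∀ x ∈ Ioo (0:ℝ) 1, ∀ t ∈ Ioc (0:ℝ) T,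
      pdt w2 x t = pdx (pdx w2) x t + u x t * pdx w2 x t + c2 x t * w2 x t := by
    intro x hx t ht
    have hE := hpde' x hx t ht
    simp only [hw2def, hc2def]
    rw [transform_pdt M v hv, transform_pdxx M v hv, transform_pdx M v hv, hE]
    ring
  have hpde2' := pde_extend T w2 u c2 hw2C hu.continuous hc2cont hpde2
  have hbc2 : ∀ t ∈ Icc (0:ℝ) T, pdx w2 0 t = 0 ∧ pdx w2 1 t = 0 := by
    intro t ht
    constructor
    · rw [hw2def, transform_pdx M v hv, (hbc t ht).1, mul_zero]
    · rw [hw2def, transform_pdx M v hv, (hbc t ht).2, mul_zero]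
  have hinit2 : ∀ x ∈ Icc (0:ℝ) 1, α ≤ w2 x 0 := by
    intro x hx
    have h1 := hinit x hx
    have : w2 x 0 = v x 0 := by simp [hw2def]
    linarith
  have hsign2 : ∀ x ∈ Icc (0:ℝ) 1, ∀ t ∈ Icc (0:ℝ) T,
      w2 x t < α → 0 ≤ c2 x t * w2 x t := by
    intro x hx t ht _
    apply mul_nonneg
    · have h2 := hM x hx t ht
      have h3 := neg_abs_le (pdx u x t)
      simp only [hc2def]
      linarith
    · exact mul_nonneg (Real.exp_pos _).le (hvpos x hx t ht)
  have hfin := min_principle T α hT w2 u c2 hw2C hpde2' hbc2 hinit2 hsign2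
  intro x hx t ht
  constructor
  · have h1 := hfin x hx t ht
    have h2 : α * Real.exp (-M * t)
        ≤ (Real.exp (M * t) * v x t) * Real.exp (-M * t) :=
      mul_le_mul_of_nonneg_right h1 (Real.exp_pos _).le
    have h3 : Real.exp (M * t) * Real.exp (-M * t) = 1 := by
      rw [← Real.exp_add]
      norm_num
    have h4 : Real.exp (M * t) * v x t * Real.exp (-M * t) = v x t := by
      rw [mul_comm (Real.exp (M * t)) (v x t), mul_assoc, h3, mul_one]
    linarith [h4 ▸ h2]
  · apply mul_le_mul_of_nonneg_left _ hα.le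
    apply Real.exp_le_exp.mpr
    nlinarith [ht.2]
end

section
/- Let v∞ > 0 and define h(v) = v ln(v/v∞) − (v − v∞) for v > 0. Let Ω₁ = {v : 0 < v ≤ v∞/2} ∪ {v : v ≥ 3v∞/2}. Then sup_{v ∈ Ω₁} |v − v∞| / h(v) = 1/(3 ln(3/2) − 1); in particular, for every v ∈ Ω₁: |v − v∞| ≤ h(v)/(3 ln(3/2) − 1). -/
/-- The relative entropy function `h(v) = v ln(v/v∞) − (v − v∞)`. -/
noncomputable def relEnt (vinf v : ℝ) : ℝ := v * Real.log (v / vinf) - (v - vinf)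

private lemma hL1 : 1/3 < Real.log (3/2) := by
  rw [Real.lt_log_iff_exp_lt (by norm_num : (0:ℝ) < 3/2)]
  have h3 : Real.exp (1/3) ^ 3 = Real.exp 1 := by
    rw [← Real.exp_nat_mul]; norm_num
  nlinarith [Real.exp_one_lt_d9, Real.exp_pos (1/3:ℝ), sq_nonneg (Real.exp (1/3) - 3/2), sq_nonneg (Real.exp (1/3))]

private lemma hL2 : Real.log (3/2) < 1/2 := by
  rw [Real.log_lt_iff_lt_exp (by norm_num : (0:ℝ) < 3/2)]
  have h2 : Real.exp (1/2) ^ 2 = Real.exp 1 := by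
    rw [← Real.exp_nat_mul]; norm_num
  nlinarith [Real.exp_one_gt_d9, Real.exp_pos (1/2:ℝ)]

private lemma h27 : Real.log 2 + 3 * Real.log (3/2) < 2 := by
  have heq : Real.log 2 + 3 * Real.log (3/2) = Real.log (27/4) := by
    rw [show (27:ℝ)/4 = 2 * (3/2)^3 by norm_num, Real.log_mul (by norm_num) (by positivity), Real.log_pow]
    push_cast; ring
  rw [heq, Real.log_lt_iff_lt_exp (by norm_num)]
  have h2 : Real.exp 2 = Real.exp 1 ^ 2 := by
    rw [← Real.exp_nat_mul]; norm_num
  nlinarith [Real.exp_one_gt_d9]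

/-- tangent-line lower bound for log -/
private lemma log_tangent {a v : ℝ} (ha : 0 < a) (hv : 0 < v) :
    Real.log a + 1 - a / v ≤ Real.log v := by
  have h := Real.log_le_sub_one_of_pos (show 0 < a / v by positivity)
  rw [Real.log_div (ne_of_gt ha) (ne_of_gt hv)] at h
  linarith

/-- key inequality in normalized form -/
private lemma key (t : ℝ) (ht : (0 < t ∧ t ≤ 1/2) ∨ 3/2 ≤ t) :
    (3 * Real.log (3/2) - 1) * |t - 1| ≤ t * Real.log t - (t - 1) := by
  set L := Real.log (3/2) with hL
  rcases ht with ⟨ht0, ht12⟩ | ht32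
  · -- left branch, |t-1| = 1 - t
    rw [abs_of_nonpos (by linarith)]
    have htan := log_tangent (show (0:ℝ) < 1/2 by norm_num) ht0
    have hml : t * (Real.log (1/2) + 1 - (1/2) / t) ≤ t * Real.log t :=
      mul_le_mul_of_nonneg_left htan (le_of_lt ht0)
    have hlog2 : Real.log (1/2) = - Real.log 2 := by
      rw [show (1:ℝ)/2 = 2⁻¹ by norm_num, Real.log_inv]
    rw [hlog2] at hml
    have hexp : t * (-Real.log 2 + 1 - (1/2)/t) = -t * Real.log 2 + t - 1/2 := by
      field_simp
    rw [hexp] at hml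
    have h2 : (0:ℝ) < Real.log 2 - (3 * L - 1) := by
      have := Real.log_two_gt_d9
      have := hL2
      simp only [hL]
      nlinarith
    nlinarith [mul_nonneg (le_of_lt h2) (show (0:ℝ) ≤ 1/2 - t by linarith), h27, hL1]
  · -- right branch, |t-1| = t - 1
    rw [abs_of_nonneg (by linarith)]
    have ht0 : (0:ℝ) < t := by linarith
    have htan := log_tangent (show (0:ℝ) < 3/2 by norm_num) ht0
    have hml : t * (L + 1 - (3/2) / t) ≤ t * Real.log t :=
      mul_le_mul_of_nonneg_left htan (le_of_lt ht0)
    have hexp : t * (L + 1 - (3/2)/t) = t * L + t - 3/2 := by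
      field_simp
    rw [hexp] at hml
    nlinarith [hL2, mul_nonneg (show (0:ℝ) ≤ 1 - 2*L by nlinarith [hL2]) (show (0:ℝ) ≤ t - 3/2 by linarith)]

/-- bound (2.9): on `Ω₁ = {0 < v ≤ v∞/2} ∪ {v ≥ 3v∞/2}`,
`sup |v − v∞| / h(v) = 1/(3 ln(3/2) − 1)`; in particular
`|v − v∞| ≤ h(v)/(3 ln(3/2) − 1)` for every `v ∈ Ω₁`. -/
theorem statement16 (vinf : ℝ) (hvinf : 0 < vinf) :
    sSup ((fun v => |v - vinf| / relEnt vinf v) ''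
        ({v : ℝ | 0 < v ∧ v ≤ vinf / 2} ∪ {v : ℝ | 3 * vinf / 2 ≤ v}))
      = 1 / (3 * Real.log (3 / 2) - 1) ∧
    ∀ v : ℝ, ((0 < v ∧ v ≤ vinf / 2) ∨ 3 * vinf / 2 ≤ v) →
      |v - vinf| ≤ relEnt vinf v / (3 * Real.log (3 / 2) - 1) := by
  set c := 3 * Real.log (3/2) - 1 with hc
  have hcpos : 0 < c := by simp only [hc]; nlinarith [hL1]
  -- main pointwise bound : c * |v - vinf| ≤ relEnt vinf v
  have main : ∀ v : ℝ, ((0 < v ∧ v ≤ vinf / 2) ∨ 3 * vinf / 2 ≤ v) →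
      c * |v - vinf| ≤ relEnt vinf v := by
    intro v hv
    have hv0 : 0 < v := by
      rcases hv with ⟨h, _⟩ | h
      · exact h
      · linarith
    set t := v / vinf with htdef
    have ht0 : 0 < t := by positivity
    have hvt : v = t * vinf := by rw [htdef, div_mul_cancel₀ v hvinf.ne']
    have hts : (0 < t ∧ t ≤ 1/2) ∨ 3/2 ≤ t := by
      rcases hv with ⟨_, h⟩ | h
      · left; exact ⟨ht0, by rw [htdef, div_le_div_iff₀ hvinf (by norm_num)]; linarith⟩
      · right; rw [htdef, le_div_iff₀ hvinf]; linarith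
    have hkey := key t hts
    have hre : relEnt vinf v = vinf * (t * Real.log t - (t - 1)) := by
      unfold relEnt
      rw [hvt, show t * vinf / vinf = t by field_simp]
      ring
    have habs : |v - vinf| = vinf * |t - 1| := by
      rw [hvt, show t * vinf - vinf = vinf * (t - 1) by ring, abs_mul,
        abs_of_pos hvinf]
    rw [hre, habs]
    calc c * (vinf * |t - 1|) = vinf * (c * |t - 1|) := by ring
    _ ≤ vinf * (t * Real.log t - (t - 1)) :=
        mul_le_mul_of_nonneg_left hkey (le_of_lt hvinf)
  -- positivity of relEnt on the region
  have hpos : ∀ v : ℝ, ((0 < v ∧ v ≤ vinf / 2) ∨ 3 * vinf / 2 ≤ v) →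
      0 < relEnt vinf v := by
    intro v hv
    have h1 := main v hv
    have h2 : vinf / 2 ≤ |v - vinf| := by
      rcases hv with ⟨h, h'⟩ | h
      · rw [abs_of_nonpos (by linarith)]; linarith
      · rw [abs_of_nonneg (by linarith)]; linarith
    calc (0:ℝ) < c * (vinf / 2) := by positivity
    _ ≤ c * |v - vinf| := mul_le_mul_of_nonneg_left h2 hcpos.le
    _ ≤ relEnt vinf v := h1
  constructor
  · apply IsGreatest.csSup_eq
    constructor
    · -- 1/c is attained at v = 3 vinf / 2
      refine ⟨3 * vinf / 2, Or.inr (by simp only [Set.mem_setOf_eq]; exact le_refl _), ?_⟩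
      show |3 * vinf / 2 - vinf| / relEnt vinf (3 * vinf / 2) = 1 / c
      have hre : relEnt vinf (3 * vinf / 2) = (vinf / 2) * c := by
        unfold relEnt
        rw [show 3 * vinf / 2 / vinf = 3/2 by field_simp]
        simp only [hc]; ring
      have habs : |3 * vinf / 2 - vinf| = vinf / 2 := by
        rw [abs_of_nonneg (by linarith)]; ring
      rw [hre, habs]
      rw [div_eq_div_iff (by positivity) (by positivity)]
      ring
    · rintro x ⟨v, hv, rfl⟩
      have hv' : (0 < v ∧ v ≤ vinf / 2) ∨ 3 * vinf / 2 ≤ v := by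
        rcases hv with h | h
        · exact Or.inl h
        · exact Or.inr h
      have h1 := main v hv'
      have h2 := hpos v hv'
      rw [div_le_div_iff₀ h2 hcpos]
      linarith
  · intro v hv
    have h1 := main v hv
    rw [le_div_iff₀ hcpos]
    nlinarith [abs_nonneg (v - vinf)]
end

section
/- Let v∞ > 0 and define h(v) = v ln(v/v∞) − (v − v∞) for v > 0. Let Ω₂ = {v : v∞/2 ≤ v ≤ 3v∞/2}. Then sup_{v ∈ Ω₂, v ≠ v∞} |v − v∞|² / h(v) = v∞/(6 ln(3/2) − 2); in particular, for every v ∈ Ω₂: |v − v∞|² ≤ v∞ · h(v)/(6 ln(3/2) − 2). -/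
open Real Set

namespace S17

noncomputable def K : ℝ := 6 * Real.log (3/2) - 2

lemma log32_gt : 1/3 < Real.log (3/2) := by
  have h : Real.log ((3/2:ℝ)⁻¹) < (3/2:ℝ)⁻¹ - 1 :=
    Real.log_lt_sub_one_of_pos (by norm_num) (by norm_num)
  rw [Real.log_inv] at h
  linarith

lemma log32_lt : Real.log (3/2) < 5/12 := by
  have e1 : (2.7182818283:ℝ) < Real.exp 1 := Real.exp_one_gt_d9
  have h1 : (2.7182818283:ℝ)^5 ≤ (Real.exp 1)^5 :=
    pow_le_pow_left₀ (by norm_num) e1.le 5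
  have h2 : (3/2:ℝ)^12 < (Real.exp 1)^5 := lt_of_lt_of_le (by norm_num) h1
  have h3 := Real.log_lt_log (by positivity) h2
  rw [Real.log_pow, Real.exp_one_pow, Real.log_exp] at h3
  push_cast at h3
  linarith

lemma K_pos : 0 < K := by have := log32_gt; simp only [K]; linarith

lemma K_lt_half : K < 1/2 := by have := log32_lt; simp only [K]; linarith

noncomputable def f (t : ℝ) : ℝ := t * Real.log t - t + 1 - K * (t-1)^2

lemma hasDerivAt_f {x : ℝ} (hx : x ≠ 0) :
    HasDerivAt f (Real.log x - 2*K*(x-1)) x := by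
  have h1 := Real.hasDerivAt_mul_log hx
  have h2 : HasDerivAt (fun t : ℝ => K * (t-1)^2) (K * (2*(x-1))) x := by
    have h3 : HasDerivAt (fun t : ℝ => (t-1)^2) (2*(x-1)) x := by
      simpa using ((hasDerivAt_id' x).sub_const 1).fun_pow 2
    exact h3.const_mul K
  have h4 := ((h1.sub (hasDerivAt_id x)).add_const 1).sub h2
  refine h4.congr_deriv ?_
  ring

lemma deriv_f {x : ℝ} (hx : x ≠ 0) : deriv f x = Real.log x - 2*K*(x-1) :=
  (hasDerivAt_f hx).deriv

lemma f_one : f 1 = 0 := by simp [f]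

lemma f_threehalf : f (3/2) = 0 := by
  simp only [f, K]; ring

lemma log_interp {a b μ ν : ℝ} (ha : 0 < a) (hb : 0 < b) (hμ : 0 ≤ μ) (hν : 0 ≤ ν)
    (h : μ + ν = 1) : μ * Real.log a + ν * Real.log b ≤ Real.log (μ*a + ν*b) := by
  simpa using strictConcaveOn_log_Ioi.concaveOn.2 (mem_Ioi.2 ha) (mem_Ioi.2 hb) hμ hν h

lemma contOn {a b : ℝ} (ha : 0 < a) : ContinuousOn f (Icc a b) := fun x hx =>
  ((hasDerivAt_f (ne_of_gt (lt_of_lt_of_le ha hx.1))).continuousAt).continuousWithinAt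

lemma diffOn {a b : ℝ} (ha : 0 < a) : DifferentiableOn ℝ f (interior (Icc a b)) := by
  rw [interior_Icc]
  exact fun x hx =>
    ((hasDerivAt_f (ne_of_gt (lt_trans ha hx.1))).differentiableAt).differentiableWithinAt

lemma f_nonneg : ∀ t ∈ Icc (1/2:ℝ) (3/2), 0 ≤ f t := by
  intro t ht
  obtain ⟨ht1, ht2⟩ := ht
  rcases le_or_gt t 1 with hle | hgt
  · -- t ∈ [1/2, 1] : f is antitone there
    have hanti : AntitoneOn f (Icc (1/2:ℝ) 1) := by
      apply antitoneOn_of_deriv_nonpos (convex_Icc _ _) (contOn (by norm_num)) (diffOn (by norm_num))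
      intro x hx
      rw [interior_Icc] at hx
      obtain ⟨hx1, hx2⟩ := hx
      rw [deriv_f (by linarith)]
      have hlog : Real.log x ≤ x - 1 := Real.log_le_sub_one_of_pos (by linarith)
      have hK := K_lt_half
      nlinarith
    have := hanti ⟨ht1, hle⟩ (by constructor <;> norm_num) hle
    rwa [f_one] at this
  · -- t ∈ (1, 3/2]
    rcases le_or_gt 0 (Real.log t - 2*K*(t-1)) with hpos | hneg
    · -- f monotone on [1, t]
      have hmono : MonotoneOn f (Icc (1:ℝ) t) := by
        apply monotoneOn_of_deriv_nonneg (convex_Icc _ _) (contOn (by norm_num))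
          (diffOn (by norm_num))
        intro s hs
        rw [interior_Icc] at hs
        obtain ⟨hs1, hs2⟩ := hs
        rw [deriv_f (by linarith)]
        set ν : ℝ := (s-1)/(t-1) with hν
        set μ : ℝ := (t-s)/(t-1) with hμ
        have htn : (0:ℝ) < t - 1 := by linarith
        have hν0 : 0 ≤ ν := div_nonneg (by linarith) htn.le
        have hμ0 : 0 ≤ μ := div_nonneg (by linarith) htn.le
        have hsum : μ + ν = 1 := by rw [hμ, hν]; field_simp [htn.ne']; ring
        have hcomb : μ * 1 + ν * t = s := by rw [hμ, hν]; field_simp [htn.ne']; ring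
        have hlog := log_interp one_pos (by linarith : (0:ℝ) < t) hμ0 hν0 hsum
        rw [hcomb, Real.log_one, mul_zero, zero_add] at hlog
        have hs1' : s - 1 = ν * (t-1) := by rw [hν]; field_simp [htn.ne']
        have hkey : ν * (Real.log t - 2*K*(t-1)) = ν * Real.log t - 2*K*(s-1) := by
          rw [hs1']; ring
        linarith [mul_nonneg hν0 hpos]
      have := hmono ⟨le_refl 1, hgt.le⟩ ⟨hgt.le, le_refl t⟩ hgt.le
      rwa [f_one] at this
    · -- f antitone on [t, 3/2]
      have hanti : AntitoneOn f (Icc t (3/2:ℝ)) := by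
        apply antitoneOn_of_deriv_nonpos (convex_Icc _ _) (contOn (by linarith))
          (diffOn (by linarith))
        intro s hs
        rw [interior_Icc] at hs
        obtain ⟨hs1, hs2⟩ := hs
        have hs1' : 1 < s := lt_trans hgt hs1
        rw [deriv_f (by linarith)]
        set ν : ℝ := (t-1)/(s-1) with hν
        set μ : ℝ := (s-t)/(s-1) with hμ
        have hsn : (0:ℝ) < s - 1 := by linarith
        have hν0 : 0 < ν := div_pos (by linarith) hsn
        have hμ0 : 0 ≤ μ := div_nonneg (by linarith) hsn.le
        have hsum : μ + ν = 1 := by rw [hμ, hν]; field_simp [hsn.ne']; ring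
        have hcomb : μ * 1 + ν * s = t := by rw [hμ, hν]; field_simp [hsn.ne']; ring
        have hlog := log_interp one_pos (by linarith : (0:ℝ) < s) hμ0 hν0.le hsum
        rw [hcomb, Real.log_one, mul_zero, zero_add] at hlog
        have ht1' : t - 1 = ν * (s-1) := by rw [hν]; field_simp [hsn.ne']
        -- ν * log s ≤ log t < 2K(t-1) = 2K ν (s-1) so log s < 2K(s-1)
        have hlt : ν * Real.log s < ν * (2*K*(s-1)) := by
          calc ν * Real.log s ≤ Real.log t := hlog
            _ < 2*K*(t-1) := by linarith
            _ = ν * (2*K*(s-1)) := by rw [ht1']; ring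
        have := (mul_lt_mul_iff_right₀ hν0).1 hlt
        linarith
      have := hanti ⟨le_refl t, ht2⟩ ⟨ht2, le_refl _⟩ ht2
      rwa [f_threehalf] at this

/-- normalized key inequality -/
lemma key {t : ℝ} (h1 : 1/2 ≤ t) (h2 : t ≤ 3/2) :
    K * (t-1)^2 ≤ t * Real.log t - t + 1 := by
  have := f_nonneg t ⟨h1, h2⟩
  simp only [f] at this
  linarith

lemma key_strict {t : ℝ} (h1 : 1/2 ≤ t) (h2 : t ≤ 3/2) (hne : t ≠ 1) :
    0 < t * Real.log t - t + 1 := by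
  have hk := key h1 h2
  have h0 : 0 < K * (t-1)^2 := by
    exact mul_pos K_pos (sq_pos_of_ne_zero (sub_ne_zero.2 hne))
  linarith

end S17

/-- bound (2.10): on `Ω₂ = {v∞/2 ≤ v ≤ 3v∞/2}`,
`sup_{v ≠ v∞} |v − v∞|² / h(v) = v∞/(6 ln(3/2) − 2)`; in particular
`|v − v∞|² ≤ v∞ h(v)/(6 ln(3/2) − 2)` for every `v ∈ Ω₂`. -/
theorem statement17 (vinf : ℝ) (hvinf : 0 < vinf) :
    sSup ((fun v => |v - vinf| ^ 2 / relEnt vinf v) ''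
        {v : ℝ | vinf / 2 ≤ v ∧ v ≤ 3 * vinf / 2 ∧ v ≠ vinf})
      = vinf / (6 * Real.log (3 / 2) - 2) ∧
    ∀ v : ℝ, vinf / 2 ≤ v → v ≤ 3 * vinf / 2 →
      |v - vinf| ^ 2 ≤ vinf * relEnt vinf v / (6 * Real.log (3 / 2) - 2) := by
  have hK : (6 * Real.log (3/2) - 2) = S17.K := rfl
  have hKpos := S17.K_pos
  -- the pointwise bound
  have main : ∀ v : ℝ, vinf / 2 ≤ v → v ≤ 3 * vinf / 2 →
      |v - vinf| ^ 2 ≤ vinf * relEnt vinf v / S17.K := by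
    intro v hv1 hv2
    set t : ℝ := v / vinf with htdef
    have hvt : v = vinf * t := by rw [htdef]; field_simp
    have ht1 : 1/2 ≤ t := by rw [htdef, le_div_iff₀ hvinf]; linarith
    have ht2 : t ≤ 3/2 := by rw [htdef, div_le_iff₀ hvinf]; linarith
    have hrel : relEnt vinf v = vinf * (t * Real.log t - t + 1) := by
      rw [relEnt, ← htdef, hvt]; ring
    have habs : |v - vinf| ^ 2 = vinf^2 * (t-1)^2 := by
      rw [sq_abs, hvt]; ring
    have hkey := S17.key ht1 ht2
    rw [habs, hrel, le_div_iff₀ hKpos]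
    nlinarith [sq_nonneg (t-1), sq_nonneg vinf, hvinf]
  constructor
  · rw [hK]
    apply IsGreatest.csSup_eq
    constructor
    · -- membership: attained at v = 3*vinf/2
      refine ⟨3*vinf/2, ⟨by linarith, le_refl _, by intro h; linarith⟩, ?_⟩
      have h1 : (3*vinf/2) / vinf = (3/2:ℝ) := by field_simp
      have h2 : relEnt vinf (3*vinf/2) = vinf * S17.K / 4 := by
        simp only [relEnt, h1, S17.K]; ring
      have h3 : |3*vinf/2 - vinf| = vinf/2 := by
        rw [abs_of_pos (by linarith)]; ring
      show |3*vinf/2 - vinf| ^ 2 / relEnt vinf (3*vinf/2) = vinf / S17.K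
      rw [h2, h3]
      field_simp
      ring
    · -- upper bound
      rintro y ⟨v, ⟨hv1, hv2, hvne⟩, rfl⟩
      set t : ℝ := v / vinf with htdef
      have hvt : v = vinf * t := by rw [htdef]; field_simp
      have ht1 : 1/2 ≤ t := by rw [htdef, le_div_iff₀ hvinf]; linarith
      have ht2 : t ≤ 3/2 := by rw [htdef, div_le_iff₀ hvinf]; linarith
      have htne : t ≠ 1 := by
        intro h; apply hvne; rw [hvt, h, mul_one]
      have hrel : relEnt vinf v = vinf * (t * Real.log t - t + 1) := by
        rw [relEnt, ← htdef, hvt]; ring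
      have hpos : 0 < relEnt vinf v := by
        rw [hrel]
        exact mul_pos hvinf (S17.key_strict ht1 ht2 htne)
      rw [div_le_div_iff₀ hpos hKpos]
      have := main v hv1 hv2
      rw [le_div_iff₀ hKpos] at this
      linarith
  · intro v hv1 hv2
    rw [hK]
    exact main v hv1 hv2
end
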